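/- Stability differential inequality: if a(t) solves the dyadic system with a_j(0) ≥ 0, b_j = a_j − λ^{−j/3}, and d_j defined by d_0 = λ^{−1/6} b_0, d_j = λ^{(j−1)/3}(λ^{1/6} b_j − λ^{−1/6} b_{j−1}), then for every k > 1 and t ≥ 0: (d/dt) Σ_{j=0}^k b_j(t)² ≤ −Σ_{j=0}^k d_j(t)² + d_{k+1}(t)². -/

import Mathlib

open Real Set MeasureTheory Finset Filter

noncomputable def lam : ℝ := (2:ℝ) ^ ((5:ℝ)/2)

/-- Right-hand side of the dyadic system: `da_j/dt = λ^{j-1} a_{j-1}² − λ^j a_j a_{j+1} + f_j`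
with `a_{-1}=0`, forcing `f_0 > 0`, `f_j = 0` for `j ≥ 1`. -/
noncomputable def dyadicRHS (f0 : ℝ) (a : ℕ → ℝ) : ℕ → ℝ
  | 0 => -(a 0 * a 1) + f0
  | (j+1) => lam ^ j * (a j)^2 - lam ^ (j+1) * a (j+1) * a (j+2)

/-- A weak (= classical) solution of the dyadic system on `[0,∞)`: an `ℓ²`-valued
function whose components are differentiable and satisfy the ODEs. -/
def IsDyadicSolution (f0 : ℝ) (a : ℝ → ℕ → ℝ) : Prop :=
  (∀ t ∈ Ici (0:ℝ), Summable (fun j => (a t j)^2)) ∧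
  (∀ j, ∀ t ∈ Ici (0:ℝ), HasDerivWithinAt (fun s => a s j) (dyadicRHS f0 (a t) j) (Ici 0) t)

/-- Deviation from the fixed point: `b_j = a_j − λ^{−j/3}`. -/
noncomputable def bvar (a : ℝ → ℕ → ℝ) (t : ℝ) (j : ℕ) : ℝ := a t j - lam ^ (-(j:ℝ)/3)

/-- Differenced variables: `d_0 = λ^{−1/6} b_0`, `d_j = λ^{(j−1)/3}(λ^{1/6} b_j − λ^{−1/6} b_{j−1})`. -/
noncomputable def dvar (a : ℝ → ℕ → ℝ) (t : ℝ) : ℕ → ℝ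
  | 0 => lam ^ (-(1:ℝ)/6) * bvar a t 0
  | (i+1) => lam ^ ((i:ℝ)/3) * (lam ^ ((1:ℝ)/6) * bvar a t (i+1) - lam ^ (-(1:ℝ)/6) * bvar a t i)

/-! ### Auxiliary facts about `lam` and its sixth root -/

lemma lam_pos : 0 < lam := Real.rpow_pos_of_pos (by norm_num) _

/-- The sixth root of `lam`; every power of `lam` occurring below is an integer power of it. -/
noncomputable def muc : ℝ := lam ^ ((1:ℝ)/6)

lemma muc_pos : 0 < muc := Real.rpow_pos_of_pos lam_pos _

lemma muc_ne : muc ≠ 0 := ne_of_gt muc_pos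

lemma muc_npow (n : ℕ) : muc ^ n = lam ^ ((n:ℝ)/6) := by
  rw [muc, ← Real.rpow_natCast (lam ^ ((1:ℝ)/6)) n, ← Real.rpow_mul lam_pos.le]
  congr 1
  ring

lemma lam_inv_pow (j : ℕ) : lam ^ (-(j:ℝ)/3) = (muc ^ (2*j))⁻¹ := by
  rw [muc_npow, ← Real.rpow_neg lam_pos.le]
  congr 1
  push_cast
  ring

lemma lam_npow (j : ℕ) : lam ^ j = muc ^ (6*j) := by
  rw [muc_npow, ← Real.rpow_natCast lam j]
  congr 1
  push_cast
  ring

lemma lam_sixth : lam ^ ((1:ℝ)/6) = muc := rfl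

lemma lam_neg_sixth : lam ^ (-(1:ℝ)/6) = muc⁻¹ := by
  rw [show -(1:ℝ)/6 = -(1/6) by ring, Real.rpow_neg lam_pos.le]
  rfl

lemma lam_third_pow (i : ℕ) : lam ^ ((i:ℝ)/3) = muc ^ (2*i) := by
  rw [muc_npow]
  congr 1
  push_cast
  ring

/-! ### Generic algebraic identity -/

/-- `dyadicRHS` written in terms of the deviation variables. -/
noncomputable def Rg (b : ℕ → ℝ) : ℕ → ℝ
  | 0 => -((b 0 + 1) * (b 1 + (muc^2)⁻¹)) + (muc^2)⁻¹
  | (j+1) => muc^(6*j) * (b j + (muc^(2*j))⁻¹)^2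
      - muc^(6*j+6) * (b (j+1) + (muc^(2*j+2))⁻¹) * (b (j+2) + (muc^(2*j+4))⁻¹)

/-- `dvar` written in terms of the deviation variables. -/
noncomputable def Dg (b : ℕ → ℝ) : ℕ → ℝ
  | 0 => muc⁻¹ * b 0
  | (j+1) => muc^(2*j) * (muc * b (j+1) - muc⁻¹ * b j)

lemma alg (b : ℕ → ℝ) : ∀ k : ℕ,
    ∑ j ∈ Finset.range (k+1), 2 * b j * Rg b j
      = -∑ j ∈ Finset.range (k+1), (Dg b j)^2 + (Dg b (k+1))^2
        - 2 * (muc^(4*k) / muc^2) * (b k)^2 - muc^(4*k+2) * (b (k+1))^2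
        - 2 * muc^(6*k) * (b k)^2 * (b (k+1)) := by
  intro k
  induction k with
  | zero =>
      simp only [Finset.sum_range_succ, Finset.sum_range_zero]
      rw [show Rg b 0 = -((b 0 + 1) * (b 1 + (muc^2)⁻¹)) + (muc^2)⁻¹ from rfl,
        show Dg b 0 = muc⁻¹ * b 0 from rfl,
        show Dg b (0+1) = muc^(2*0) * (muc * b (0+1) - muc⁻¹ * b 0) from rfl]
      field_simp [muc_ne]
      ring
  | succ k ih =>
      rw [Finset.sum_range_succ, Finset.sum_range_succ (fun j => (Dg b j)^2) (k+1), ih]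
      rw [show Rg b (k+1) = muc^(6*k) * (b k + (muc^(2*k))⁻¹)^2
            - muc^(6*k+6) * (b (k+1) + (muc^(2*k+2))⁻¹) * (b (k+1+1) + (muc^(2*k+4))⁻¹) from rfl,
        show Dg b (k+1) = muc^(2*k) * (muc * b (k+1) - muc⁻¹ * b k) from rfl,
        show Dg b (k+1+1) = muc^(2*(k+1)) * (muc * b (k+1+1) - muc⁻¹ * b (k+1)) from rfl]
      field_simp [muc_ne]
      ring

/-! ### Translating the concrete objects into the generic ones -/

lemma bvar_eq (a : ℝ → ℕ → ℝ) (t : ℝ) (i : ℕ) : a t i = bvar a t i + (muc^(2*i))⁻¹ := by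
  rw [bvar, lam_inv_pow]
  ring

lemma Rg_eq (a : ℝ → ℕ → ℝ) (t : ℝ) (j : ℕ) :
    dyadicRHS (lam ^ (-(1:ℝ)/3)) (a t) j = Rg (bvar a t) j := by
  have h1 : lam ^ (-(1:ℝ)/3) = (muc^2)⁻¹ := by
    rw [show (-(1:ℝ)/3) = (-((1:ℕ):ℝ)/3) by norm_num, lam_inv_pow]
  cases j with
  | zero =>
      simp only [dyadicRHS, Rg, h1]
      rw [bvar_eq a t 0, bvar_eq a t 1]
      ring
  | succ i =>
      simp only [dyadicRHS, Rg]
      rw [bvar_eq a t i, bvar_eq a t (i+1), bvar_eq a t (i+2), lam_npow i, lam_npow (i+1)]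
      ring

lemma Dg_eq (a : ℝ → ℕ → ℝ) (t : ℝ) (j : ℕ) : dvar a t j = Dg (bvar a t) j := by
  cases j with
  | zero => simp only [dvar, Dg, lam_neg_sixth]
  | succ i => simp only [dvar, Dg, lam_neg_sixth, lam_sixth, lam_third_pow]

/-! ### Positivity of solutions -/

lemma rhs_key (a : ℕ → ℝ) (j : ℕ) :
    0 ≤ dyadicRHS (lam ^ (-(1:ℝ)/3)) a j + a j * (lam ^ j * a (j+1)) := by
  cases j with
  | zero =>
      have hf : (0:ℝ) ≤ lam ^ (-(1:ℝ)/3) := (Real.rpow_pos_of_pos lam_pos _).le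
      simp only [dyadicRHS, pow_zero, one_mul]
      nlinarith [hf]
  | succ i =>
      simp only [dyadicRHS]
      nlinarith [mul_nonneg (pow_nonneg lam_pos.le i) (sq_nonneg (a i))]

lemma apos (a : ℝ → ℕ → ℝ) (ha : IsDyadicSolution (lam ^ (-(1:ℝ)/3)) a)
    (h0 : ∀ j, 0 ≤ a 0 j) (j : ℕ) : ∀ t ∈ Ici (0:ℝ), 0 ≤ a t j := by
  intro t ht
  have hcont : ∀ i, ContinuousOn (fun s => a s i) (Ici 0) := fun i s hs =>
    (ha.2 i s hs).continuousWithinAt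
  set c : ℝ → ℝ := fun s => lam ^ j * a s (j+1) with hcdef
  have hccont : ContinuousOn c (Ici 0) := by
    rw [hcdef]
    exact continuousOn_const.mul (hcont (j+1))
  set C : ℝ → ℝ := fun s => ∫ u in (0:ℝ)..s, c u with hCdef
  have hCd : ∀ x : ℝ, 0 < x → HasDerivAt C (c x) x := by
    intro x hx
    rw [hCdef]
    refine intervalIntegral.integral_hasDerivAt_right ?_ ?_ ?_
    · refine ContinuousOn.intervalIntegrable (hccont.mono ?_)
      rw [uIcc_of_le hx.le]
      exact Icc_subset_Ici_self
    · exact ContinuousOn.stronglyMeasurableAtFilter isOpen_Ioi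
        (hccont.mono Ioi_subset_Ici_self) x hx
    · exact hccont.continuousAt (Ici_mem_nhds hx)
  have hC0 : ContinuousWithinAt C (Ici 0) 0 := by
    rw [hCdef]
    refine HasDerivWithinAt.continuousWithinAt
      (intervalIntegral.integral_hasDerivWithinAt_right ?_ ?_ ?_)
    · exact IntervalIntegrable.refl
    · exact (hccont.mono Ioi_subset_Ici_self).stronglyMeasurableAtFilter_nhdsWithin
        measurableSet_Ioi 0
    · exact (hccont 0 self_mem_Ici).mono Ioi_subset_Ici_self
  have hCcont : ContinuousOn C (Ici 0) := by
    intro x hx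
    rcases eq_or_lt_of_le (Set.mem_Ici.mp hx) with h | h
    · exact h ▸ hC0
    · exact ((hCd x h).continuousAt).continuousWithinAt
  have hmono : MonotoneOn (fun s => a s j * Real.exp (C s)) (Ici 0) := by
    apply monotoneOn_of_deriv_nonneg (convex_Ici 0)
    · exact (hcont j).mul (Real.continuous_exp.comp_continuousOn hCcont)
    · rw [interior_Ici]
      intro x hx
      exact (((ha.2 j x (Ioi_subset_Ici_self hx)).hasDerivAt (Ici_mem_nhds hx)).mul
        ((hCd x hx).exp)).differentiableAt.differentiableWithinAt
    · rw [interior_Ici]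
      intro x hx
      have hda : HasDerivAt (fun s => a s j) (dyadicRHS (lam ^ (-(1:ℝ)/3)) (a x) j) x :=
        (ha.2 j x (Ioi_subset_Ici_self hx)).hasDerivAt (Ici_mem_nhds hx)
      have hd : HasDerivAt (fun s => a s j * Real.exp (C s))
          (dyadicRHS (lam ^ (-(1:ℝ)/3)) (a x) j * Real.exp (C x)
            + a x j * (Real.exp (C x) * c x)) x := hda.mul ((hCd x hx).exp)
      rw [hd.deriv]
      have hkey : 0 ≤ dyadicRHS (lam ^ (-(1:ℝ)/3)) (a x) j + a x j * c x := by
        simp only [hcdef]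
        exact rhs_key (a x) j
      have heq : dyadicRHS (lam ^ (-(1:ℝ)/3)) (a x) j * Real.exp (C x)
          + a x j * (Real.exp (C x) * c x)
          = (dyadicRHS (lam ^ (-(1:ℝ)/3)) (a x) j + a x j * c x) * Real.exp (C x) := by ring
      rw [heq]
      exact mul_nonneg hkey (Real.exp_pos _).le
  have hle := hmono self_mem_Ici ht ht
  have hC00 : C 0 = 0 := by
    simp only [hCdef]
    exact intervalIntegral.integral_same
  simp only [hC00, Real.exp_zero, mul_one] at hle
  have h2 : 0 ≤ a t j * Real.exp (C t) := le_trans (h0 j) hle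
  nlinarith [Real.exp_pos (C t)]

theorem stability_one (a : ℝ → ℕ → ℝ) (ha : IsDyadicSolution (lam ^ (-(1:ℝ)/3)) a)
    (h0 : ∀ j, 0 ≤ a 0 j) :
    ∀ k : ℕ, 1 < k → ∀ t ∈ Ici (0:ℝ), ∀ D : ℝ,
      HasDerivWithinAt (fun s => ∑ j ∈ Finset.range (k+1), (bvar a s j)^2) D (Ici 0) t →
      D ≤ -∑ j ∈ Finset.range (k+1), (dvar a t j)^2 + (dvar a t (k+1))^2 := by
  intro k hk t ht D hD
  have hb : ∀ j : ℕ, HasDerivWithinAt (fun s => bvar a s j)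
      (dyadicRHS (lam ^ (-(1:ℝ)/3)) (a t) j) (Ici 0) t := fun j =>
    (ha.2 j t ht).sub_const (lam ^ (-(j:ℝ)/3))
  have hsum : HasDerivWithinAt (fun s => ∑ j ∈ Finset.range (k+1), (bvar a s j)^2)
      (∑ j ∈ Finset.range (k+1), 2 * bvar a t j * dyadicRHS (lam ^ (-(1:ℝ)/3)) (a t) j)
      (Ici 0) t := by
    refine HasDerivWithinAt.fun_sum fun j _ => ?_
    have h := (hb j).fun_pow 2
    norm_num at h
    rw [neg_div]
    convert h using 1
  have hDeq : D = ∑ j ∈ Finset.range (k+1),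
      2 * bvar a t j * dyadicRHS (lam ^ (-(1:ℝ)/3)) (a t) j := by
    rw [← hD.derivWithin (uniqueDiffOn_Ici 0 t ht),
      hsum.derivWithin (uniqueDiffOn_Ici 0 t ht)]
  have hbk1 : 0 ≤ bvar a t (k+1) + (muc^(2*(k+1)))⁻¹ := by
    rw [← bvar_eq]
    exact apos a ha h0 (k+1) t ht
  rw [hDeq]
  simp only [Rg_eq, Dg_eq]
  rw [alg (bvar a t) k]
  set x := bvar a t k
  set y := bvar a t (k+1)
  have hpow : muc^(6*k) * (muc^(2*(k+1)))⁻¹ = muc^(4*k) / muc^2 := by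
    field_simp [muc_ne]
    ring
  have h1 : 0 ≤ muc^(4*k+2) * y^2 := mul_nonneg (pow_nonneg muc_pos.le _) (sq_nonneg y)
  have h2 : 0 ≤ 2 * muc^(6*k) * x^2 * (y + (muc^(2*(k+1)))⁻¹) :=
    mul_nonneg (mul_nonneg (mul_nonneg (by norm_num) (pow_nonneg muc_pos.le _)) (sq_nonneg x)) hbk1
  have key : 0 ≤ 2 * (muc^(4*k)/muc^2) * x^2 + muc^(4*k+2)*y^2 + 2*muc^(6*k)*x^2*y := by
    have e : 2 * (muc^(4*k)/muc^2) * x^2 + muc^(4*k+2)*y^2 + 2*muc^(6*k)*x^2*y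
        = muc^(4*k+2)*y^2 + 2*muc^(6*k)*x^2*(y + (muc^(2*(k+1)))⁻¹)
          + 2*x^2*(muc^(4*k)/muc^2 - muc^(6*k) * (muc^(2*(k+1)))⁻¹) := by ring
    rw [e, hpow, sub_self, mul_zero, add_zero]
    exact add_nonneg h1 h2
  linarith [key]
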